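/- arXiv:2010.04385 — 2 statements merged into one kernel-verified Lean document; each statement's English description precedes it below -/
import Mathlib

section
/- Let T ∈ {0,1,…,k}, with potential treatments T_z for instrument values z, and D^t_z = 1{T_z = t}. Fix i ∈ {1,…,k} and assume D^j_i ≤ D^j_0 almost surely for all j ≠ i (treatment states indexed by j, instrument values i and 0). Then for any random variable U and τ ∈ (0,1): P(U ≤ τ, D^i_0 = 0, D^i_i = 1) = Σ_{j ≠ i} P(U ≤ τ, D^j_i = 0, D^j_0 = 1). -/
open MeasureTheory Set

/-- decomposition of the compliers into state `i` as a disjoint union over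
the states they left, under the monotonicity inequalities `D^j_i ≤ D^j_0` for `j ≠ i`. -/
theorem stmt6 {Ω : Type*} [MeasurableSpace Ω] (μ : Measure Ω) [IsProbabilityMeasure μ]
    (k : ℕ) (T0 Ti : Ω → Fin (k + 1)) (hT0 : Measurable T0) (hTi : Measurable Ti)
    (i : Fin (k + 1))
    (hmono : ∀ j : Fin (k + 1), j ≠ i → μ {ω | Ti ω = j ∧ T0 ω ≠ j} = 0)
    (U : Ω → ℝ) (hU : Measurable U) (τ : ℝ) (hτ : τ ∈ Set.Ioo (0:ℝ) 1) :
    μ {ω | U ω ≤ τ ∧ T0 ω ≠ i ∧ Ti ω = i}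
      = ∑ j ∈ Finset.univ.erase i, μ {ω | U ω ≤ τ ∧ Ti ω ≠ j ∧ T0 ω = j} := by
  classical
  set N := {ω | ∃ l : Fin (k + 1), l ≠ i ∧ Ti ω = l ∧ T0 ω ≠ l} with hNdef
  have hN : μ N = 0 := by
    have hsub : N ⊆ ⋃ l ∈ Finset.univ.erase i, {ω | Ti ω = l ∧ T0 ω ≠ l} := by
      rintro ω ⟨l, hl, h1, h2⟩
      simp only [Set.mem_iUnion, Finset.mem_erase, Finset.mem_univ, and_true]
      exact ⟨l, hl, h1, h2⟩
    refine measure_mono_null hsub ?_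
    refine (measure_biUnion_null_iff (Finset.univ.erase i).countable_toSet).mpr ?_
    intro l hl
    exact hmono l (Finset.ne_of_mem_erase hl)
  have key : ∀ j ∈ Finset.univ.erase i,
      μ {ω | U ω ≤ τ ∧ Ti ω ≠ j ∧ T0 ω = j}
        = μ {ω | U ω ≤ τ ∧ Ti ω = i ∧ T0 ω = j} := by
    intro j hj
    have hji : j ≠ i := Finset.ne_of_mem_erase hj
    apply measure_congr
    rw [ae_eq_set]
    constructor
    · refine measure_mono_null ?_ hN
      rintro ω ⟨⟨h1, h2, h3⟩, h4⟩
      refine ⟨Ti ω, ?_, rfl, ?_⟩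
      · intro h; exact h4 ⟨h1, h ▸ rfl, h3⟩
      · rw [h3]; exact fun h => h2 h.symm
    · refine measure_mono_null ?_ hN
      rintro ω ⟨⟨h1, h2, h3⟩, h4⟩
      exact absurd ⟨h1, fun h => hji (h.symm.trans h2), h3⟩ h4
  rw [Finset.sum_congr rfl key]
  have hset : {ω | U ω ≤ τ ∧ T0 ω ≠ i ∧ Ti ω = i}
      = ⋃ j ∈ Finset.univ.erase i, {ω | U ω ≤ τ ∧ Ti ω = i ∧ T0 ω = j} := by
    ext ω
    simp only [Set.mem_iUnion, Set.mem_setOf_eq, Finset.mem_erase, Finset.mem_univ, and_true]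
    constructor
    · rintro ⟨h1, h2, h3⟩; exact ⟨T0 ω, h2, h1, h3, rfl⟩
    · rintro ⟨j, hj, h1, h2, h3⟩; exact ⟨h1, h3 ▸ hj, h2⟩
  rw [hset]
  refine measure_biUnion_finset ?_ ?_
  · intro a _ b _ hab
    refine Set.disjoint_left.mpr ?_
    rintro ω ⟨_, _, h3⟩ ⟨_, _, h6⟩
    exact hab (h3 ▸ h6 ▸ rfl)
  · intro j _
    exact (measurableSet_le hU measurable_const).inter
      ((hTi (measurableSet_singleton i)).inter (hT0 (measurableSet_singleton j)))
end

section
/- Let Y_s, Y_t, Y_r be random variables with continuous cdfs, all supported on a set 𝒴 whose closure equals the closure of its interior 𝒴°, and such that F_{Y_t}(𝒴°) is the same set for all three variables. Define φ_{s,t}(y) := Q_{Y_t}(F_{Y_s}(y)). Then: (a) φ_{s,t} is strictly increasing on 𝒴°; (b) φ_{s,r} = φ_{t,r} ∘ φ_{s,t} on 𝒴°; (c) φ_{t,s} is the inverse of φ_{s,t} on 𝒴°, i.e., φ_{t,s}(φ_{s,t}(y)) = y for y ∈ 𝒴°. -/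
open MeasureTheory Set

lemma cdf_mono (ν : Measure ℝ) [IsProbabilityMeasure ν] (F : ℝ → ℝ)
    (hF : ∀ y, F y = (ν (Set.Iic y)).toReal) : Monotone F := by
  intro a b hab
  rw [hF, hF]
  exact (ENNReal.toReal_le_toReal (measure_ne_top ν _) (measure_ne_top ν _)).2
    (measure_mono (Set.Iic_subset_Iic.2 hab))

lemma cdf_strict (ν : Measure ℝ) [IsProbabilityMeasure ν] (F : ℝ → ℝ)
    (hF : ∀ y, F y = (ν (Set.Iic y)).toReal)
    (𝒴 : Set ℝ)
    (h2 : ∀ y ∈ interior 𝒴, ∀ ε > 0, 0 < ν (Set.Ioo (y - ε) (y + ε)))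
    {a b c : ℝ} (hab : a < b) (hc : c ∈ interior 𝒴) (hac : a ≤ c) (hcb : c ≤ b) :
    F a < F b := by
  obtain ⟨δ, hδ, hball⟩ := Metric.isOpen_iff.1 isOpen_interior c hc
  have key : ∃ d ε, d ∈ interior 𝒴 ∧ 0 < ε ∧
      Set.Ioo (d - ε) (d + ε) ⊆ Set.Ioc a b := by
    rcases lt_or_eq_of_le hac with h | h
    · set ε := min δ (c - a) / 2 with hε
      have hε0 : 0 < ε := by
        have : 0 < min δ (c - a) := lt_min hδ (by linarith)
        positivity
      have h2ε : 2 * ε ≤ c - a := by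
        have := min_le_right δ (c - a); simp only [hε]; linarith
      have hεδ : ε < δ := by
        have := min_le_left δ (c - a); simp only [hε]; linarith
      refine ⟨c - ε, ε, hball ?_, hε0, ?_⟩
      · simp only [Metric.mem_ball, Real.dist_eq]
        rw [abs_of_nonpos (by linarith)]; linarith
      · intro x hx
        obtain ⟨hx1, hx2⟩ := hx
        constructor <;> linarith
    · set ε := min δ (b - c) / 2 with hε
      have hε0 : 0 < ε := by
        have : 0 < min δ (b - c) := lt_min hδ (by linarith)
        positivity
      have h2ε : 2 * ε ≤ b - c := by
        have := min_le_right δ (b - c); simp only [hε]; linarith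
      have hεδ : ε < δ := by
        have := min_le_left δ (b - c); simp only [hε]; linarith
      refine ⟨c + ε, ε, hball ?_, hε0, ?_⟩
      · simp only [Metric.mem_ball, Real.dist_eq]
        rw [abs_of_nonneg (by linarith)]; linarith
      · intro x hx
        obtain ⟨hx1, hx2⟩ := hx
        constructor <;> linarith
  obtain ⟨d, ε, hd, hε, hsub⟩ := key
  have hpos : 0 < ν (Set.Ioc a b) :=
    lt_of_lt_of_le (h2 d hd ε hε) (measure_mono hsub)
  have hsplit : ν (Set.Iic b) = ν (Set.Iic a) + ν (Set.Ioc a b) := by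
    rw [← measure_union (Set.Iic_disjoint_Ioc le_rfl) measurableSet_Ioc,
      Set.Iic_union_Ioc_eq_Iic hab.le]
  rw [hF, hF, hsplit, ENNReal.toReal_add (measure_ne_top _ _) (measure_ne_top _ _)]
  have := ENNReal.toReal_pos hpos.ne' (measure_ne_top ν (Set.Ioc a b))
  linarith

lemma quant_of_cdf (ν : Measure ℝ) [IsProbabilityMeasure ν] (F : ℝ → ℝ)
    (hF : ∀ y, F y = (ν (Set.Iic y)).toReal)
    (𝒴 : Set ℝ)
    (h2 : ∀ y ∈ interior 𝒴, ∀ ε > 0, 0 < ν (Set.Ioo (y - ε) (y + ε)))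
    {y : ℝ} (hy : y ∈ interior 𝒴) :
    sInf {w | F w ≥ F y} = y := by
  have hlb : ∀ w ∈ {w | F w ≥ F y}, y ≤ w := by
    intro w hw
    by_contra h
    push_neg at h
    have hlt : F w < F y := cdf_strict ν F hF 𝒴 h2 h hy h.le le_rfl
    exact absurd hw (not_le.2 hlt)
  exact le_antisymm (csInf_le ⟨y, hlb⟩ (le_refl (F y))) (le_csInf ⟨y, le_refl (F y)⟩ hlb)

/-- properties of the counterfactual mappings: strict monotonicity,
composition rule, and inversion on the interior of the common support. -/
theorem stmt8 (νs νt νr : Measure ℝ)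
    [IsProbabilityMeasure νs] [IsProbabilityMeasure νt] [IsProbabilityMeasure νr]
    (Fs Ft Fr Qs Qt Qr : ℝ → ℝ)
    (hFs : ∀ y, Fs y = (νs (Set.Iic y)).toReal)
    (hFt : ∀ y, Ft y = (νt (Set.Iic y)).toReal)
    (hFr : ∀ y, Fr y = (νr (Set.Iic y)).toReal)
    (hFsc : Continuous Fs) (hFtc : Continuous Ft) (hFrc : Continuous Fr)
    (𝒴 : Set ℝ) (hcl : closure (interior 𝒴) = closure 𝒴)
    -- supported on 𝒴 :
    (hs1 : νs (closure 𝒴) = 1) (ht1 : νt (closure 𝒴) = 1) (hr1 : νr (closure 𝒴) = 1)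
    (hs2 : ∀ y ∈ interior 𝒴, ∀ ε > 0, 0 < νs (Set.Ioo (y - ε) (y + ε)))
    (ht2 : ∀ y ∈ interior 𝒴, ∀ ε > 0, 0 < νt (Set.Ioo (y - ε) (y + ε)))
    (hr2 : ∀ y ∈ interior 𝒴, ∀ ε > 0, 0 < νr (Set.Ioo (y - ε) (y + ε)))
    -- F_{Y}(𝒴°) is the same set for all three variables :
    (himg1 : Fs '' interior 𝒴 = Ft '' interior 𝒴)
    (himg2 : Ft '' interior 𝒴 = Fr '' interior 𝒴)
    (hQs : ∀ τ, Qs τ = sInf {w | Fs w ≥ τ})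
    (hQt : ∀ τ, Qt τ = sInf {w | Ft w ≥ τ})
    (hQr : ∀ τ, Qr τ = sInf {w | Fr w ≥ τ})
    (φst φtr φsr φts : ℝ → ℝ)
    (hφst : ∀ y, φst y = Qt (Fs y)) (hφtr : ∀ y, φtr y = Qr (Ft y))
    (hφsr : ∀ y, φsr y = Qr (Fs y)) (hφts : ∀ y, φts y = Qs (Ft y)) :
    StrictMonoOn φst (interior 𝒴)
    ∧ (∀ y ∈ interior 𝒴, φsr y = φtr (φst y))
    ∧ (∀ y ∈ interior 𝒴, φts (φst y) = y) := by
  have hmono_t := cdf_mono νt Ft hFt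
  have key : ∀ y ∈ interior 𝒴, φst y ∈ interior 𝒴 ∧ Ft (φst y) = Fs y := by
    intro y hy
    have hmem : Fs y ∈ Ft '' interior 𝒴 := himg1 ▸ ⟨y, hy, rfl⟩
    obtain ⟨z, hz, hfz⟩ := hmem
    have hzeq : φst y = z := by
      rw [hφst, hQt, ← hfz, quant_of_cdf νt Ft hFt 𝒴 ht2 hz]
    rw [hzeq]; exact ⟨hz, hfz⟩
  refine ⟨?_, ?_, ?_⟩
  · intro y1 h1 y2 h2' h12
    obtain ⟨hz1, hf1⟩ := key y1 h1
    obtain ⟨hz2, hf2⟩ := key y2 h2'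
    have hFlt : Fs y1 < Fs y2 := cdf_strict νs Fs hFs 𝒴 hs2 h12 h1 le_rfl h12.le
    rw [← hf1, ← hf2] at hFlt
    by_contra h
    push_neg at h
    exact absurd (hmono_t h) (not_le.2 hFlt)
  · intro y hy
    obtain ⟨hz, hfz⟩ := key y hy
    rw [hφsr, hφtr, hfz]
  · intro y hy
    obtain ⟨hz, hfz⟩ := key y hy
    rw [hφts, hfz, hQs, quant_of_cdf νs Fs hFs 𝒴 hs2 hy]
end
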